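/- There exists a 3-dimensional pseudomanifold that is Mogami but not locally constructible (LC). In particular, the cone over a triangulated annulus from an external apex is Mogami but not LC. -/

import Mathlib

open Finset

namespace MogamiPaper

/-- A configuration of `N` labelled `d`-simplices with vertices in `V`:
facet `i` has vertex list `f i`. Vertex identifications (gluings) are recorded
by the labelling map. -/
abbrev Config (V : Type*) (d N : ℕ) := Fin N → Fin (d + 1) → V

variable {V : Type*} [DecidableEq V] {d N : ℕ}

/-- the vertex set of the `i`-th facet -/
def facet (f : Config V d N) (i : Fin N) : Finset V :=
  Finset.image (f i) Finset.univ

/-- each facet has `d+1` distinct vertices -/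
def Proper (f : Config V d N) : Prop := ∀ i, Function.Injective (f i)

/-- the facets containing a given set of vertices -/
def cells (f : Config V d N) (R : Finset V) : Finset (Fin N) :=
  Finset.univ.filter fun i => R ⊆ facet f i

/-- pseudomanifold: proper, and every `(d-1)`-face lies in at most two facets -/
def IsPseudo (f : Config V d N) : Prop :=
  Proper f ∧ ∀ R : Finset V, R.card = d → (cells f R).card ≤ 2

/-- a boundary `(d-1)`-face: contained in exactly one facet -/
def IsBdryRidge (f : Config V d N) (R : Finset V) : Prop :=
  R.card = d ∧ (cells f R).card = 1

/-- A gluing step: identify two distinct boundary `(d-1)`-faces `R`, `S`, whose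
intersection cardinality satisfies `P`, via a vertex identification `φ` that maps
`R` bijectively onto `S` and fixes everything outside `R`. -/
def Step (P : ℕ → Prop) (f g : Config V d N) : Prop :=
  ∃ R S : Finset V, IsBdryRidge f R ∧ IsBdryRidge f S ∧ R ≠ S ∧ P ((R ∩ S).card) ∧
    ∃ φ : V → V, (∀ v, v ∉ R → φ v = v) ∧ Set.InjOn φ ↑R ∧ R.image φ = S ∧
      ∀ i j, g i j = φ (f i j)

/-- Mogami gluing: the glued boundary facets share at least a vertex -/
def MogamiStep (f g : Config V d N) : Prop := Step (fun c => 1 ≤ c) f g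

/-- LC gluing: the glued boundary facets share a `(d-2)`-face -/
def LCStep (f g : Config V d N) : Prop := Step (fun c => c = d - 1) f g

/-- the dual graph: two facets are adjacent if they share a `(d-1)`-face -/
def dualGraph (f : Config V d N) : SimpleGraph (Fin N) :=
  SimpleGraph.fromRel fun i i' =>
    ∃ R : Finset V, R.card = d ∧ R ⊆ facet f i ∧ R ⊆ facet f i'

/-- UNITE: glue two disjoint boundary facets belonging to (dually) disconnected parts -/
def UniteStep (f g : Config V d N) : Prop :=
  ∃ R S : Finset V, IsBdryRidge f R ∧ IsBdryRidge f S ∧ Disjoint R S ∧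
    (∀ i ∈ cells f R, ∀ i' ∈ cells f S, ¬ (dualGraph f).Reachable i i') ∧
    ∃ φ : V → V, (∀ v, v ∉ R → φ v = v) ∧ Set.InjOn φ ↑R ∧ R.image φ = S ∧
      ∀ i j, g i j = φ (f i j)

/-- the canonical configuration of `N` pairwise disjoint `d`-simplices -/
def std (d N : ℕ) : Config (Fin N × Fin (d + 1)) d N := fun i j => (i, j)

/-- a tree of `d`-simplices (over the canonical vertex pool): obtained from `N`
disjoint simplices by UNITE steps, with connected (hence tree) dual graph -/
def IsTreeOfSimplicesC (t : Config (Fin N × Fin (d + 1)) d N) : Prop :=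
  Relation.ReflTransGen UniteStep (std d N) t ∧ (dualGraph t).Connected

/-- `g` represents `f` up to an injective relabeling of the used vertices -/
def Represents (g : Config (Fin N × Fin (d + 1)) d N) (f : Config V d N) : Prop :=
  ∃ e : Fin N × Fin (d + 1) → V,
    Set.InjOn e {x | ∃ i j, g i j = x} ∧ ∀ i j, f i j = e (g i j)

/-- Mogami: obtainable from a tree of `d`-simplices by Mogami gluings -/
def IsMogami (f : Config V d N) : Prop :=
  ∃ t g : Config (Fin N × Fin (d + 1)) d N,
    IsTreeOfSimplicesC t ∧ Relation.ReflTransGen MogamiStep t g ∧ Represents g f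

/-- locally constructible: obtainable from a tree of `d`-simplices by LC gluings -/
def IsLC (f : Config V d N) : Prop :=
  ∃ t g : Config (Fin N × Fin (d + 1)) d N,
    IsTreeOfSimplicesC t ∧ Relation.ReflTransGen LCStep t g ∧ Represents g f

/-- the geometric realization, as a subspace of `V → ℝ` -/
def realization [Fintype V] (f : Config V d N) : Set (V → ℝ) :=
  {x | (∀ v, 0 ≤ x v) ∧ (∑ v, x v) = 1 ∧ ∃ i : Fin N, ∀ v, x v ≠ 0 → v ∈ facet f i}

/-- a triangulated `d`-ball: realization homeomorphic to the unit ball of `ℝ^d` -/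
def IsBall [Fintype V] (f : Config V d N) : Prop :=
  Nonempty ((realization f) ≃ₜ
    (Metric.closedBall (0 : EuclideanSpace ℝ (Fin d)) 1 : Set (EuclideanSpace ℝ (Fin d))))

/-- all vertices lie on the boundary -/
def NoInteriorVertices (f : Config V d N) : Prop :=
  ∀ i j, ∃ R : Finset V, IsBdryRidge f R ∧ f i j ∈ R

/-- the cone over a configuration, with apex `v` -/
def cone (f : Config V d N) (v : V) : Config V (d + 1) N :=
  fun i => Fin.cons v (f i)

end MogamiPaper

section Part1
set_option maxRecDepth 40000
namespace MogamiPaper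

/-- the triangulated annulus -/
def AA : Config (Fin 7) 2 6 :=
  ![![0,1,3], ![1,3,4], ![1,2,4], ![2,4,5], ![2,0,5], ![0,5,3]]

theorem AA_pseudo : IsPseudo AA :=
  ⟨fun i => by unfold Function.Injective; revert i; decide, by decide⟩
theorem AA_apex : ∀ i, (6 : Fin 7) ∉ facet AA i := by decide
theorem coneAA_pseudo : IsPseudo (cone AA 6) :=
  ⟨fun i => by unfold Function.Injective; revert i; decide, by decide⟩

end MogamiPaper
end Part1
section Part2
namespace MogamiPaper
set_option linter.unusedSectionVars false

variable {V : Type*} [DecidableEq V] [Fintype V] {d N : ℕ}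

/-- vertices actually used by a configuration -/
def used (f : Config V d N) : Finset V :=
  Finset.image (fun p : Fin N × Fin (d+1) => f p.1 p.2) Finset.univ

/-- the set of `(d-1)`-faces (as vertex sets) -/
def tri (f : Config V d N) : Finset (Finset V) :=
  Finset.univ.biUnion fun i => (facet f i).powersetCard d

lemma mem_used {f : Config V d N} {x : V} : x ∈ used f ↔ ∃ i j, f i j = x := by
  simp [used]

lemma mem_tri {f : Config V d N} {R : Finset V} :
    R ∈ tri f ↔ (∃ i, R ⊆ facet f i) ∧ R.card = d := by
  simp [tri, Finset.mem_powersetCard]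

lemma facet_subset_used (f : Config V d N) (i : Fin N) : facet f i ⊆ used f := by
  intro x hx
  rcases Finset.mem_image.mp hx with ⟨j, _, hj⟩
  exact mem_used.mpr ⟨i, j, hj⟩

lemma bdry_mem_tri {f : Config V d N} {R : Finset V} (h : IsBdryRidge f R) : R ∈ tri f := by
  obtain ⟨hcard, hone⟩ := h
  have : (cells f R).Nonempty := Finset.card_pos.mp (by omega)
  obtain ⟨i, hi⟩ := this
  exact mem_tri.mpr ⟨⟨i, (Finset.mem_filter.mp hi).2⟩, hcard⟩

lemma bdry_subset_used {f : Config V d N} {R : Finset V} (h : IsBdryRidge f R) :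
    R ⊆ used f := by
  rcases mem_tri.mp (bdry_mem_tri h) with ⟨⟨i, hi⟩, _⟩
  exact hi.trans (facet_subset_used f i)

/-- shape shared by all gluing steps -/
def RawStep (f g : Config V d N) (R S : Finset V) : Prop :=
  IsBdryRidge f R ∧ IsBdryRidge f S ∧ R ≠ S ∧
    ∃ φ : V → V, (∀ v, v ∉ R → φ v = v) ∧ Set.InjOn φ ↑R ∧ R.image φ = S ∧
      ∀ i j, g i j = φ (f i j)

lemma step_rawStep {P} {f g : Config V d N} (h : Step P f g) :
    ∃ R S, RawStep f g R S ∧ P ((R ∩ S).card) := by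
  obtain ⟨R, S, h1, h2, h3, h4, h5⟩ := h
  exact ⟨R, S, ⟨h1, h2, h3, h5⟩, h4⟩

lemma uniteStep_rawStep {f g : Config V d N} (hd : 0 < d) (h : UniteStep f g) :
    ∃ R S, RawStep f g R S ∧ Disjoint R S := by
  obtain ⟨R, S, h1, h2, h3, _, h5⟩ := h
  refine ⟨R, S, ⟨h1, h2, ?_, h5⟩, h3⟩
  intro e
  rw [e] at h3
  rw [Finset.disjoint_self_iff_empty] at h3
  rw [h3] at h2
  simp [IsBdryRidge] at h2
  omega

end MogamiPaper
end Part2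
section Part3
namespace MogamiPaper
set_option linter.unusedSectionVars false

variable {V : Type*} [DecidableEq V] [Fintype V] {d N : ℕ}

lemma rawStep_proper {f g : Config V d N} {R S} (h : RawStep f g R S) (hg : Proper g) :
    Proper f := by
  obtain ⟨_, _, _, φ, _, _, _, hfg⟩ := h
  intro i j j' e
  apply hg i
  rw [hfg, hfg, e]

lemma facet_map {W : Type*} [DecidableEq W] {f : Config W d N} {g : Config V d N}
    {φ : W → V} (hfg : ∀ i j, g i j = φ (f i j)) (i : Fin N) :
    facet g i = (facet f i).image φ := by
  unfold facet
  rw [Finset.image_image]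
  congr 1
  funext j
  exact hfg i j

lemma injOn_facet {f g : Config V d N} {φ : V → V} (hfg : ∀ i j, g i j = φ (f i j))
    (hg : Proper g) (i : Fin N) : Set.InjOn φ ↑(facet f i) := by
  intro x hx y hy e
  rcases Finset.mem_image.mp (Finset.mem_coe.mp hx) with ⟨j, _, rfl⟩
  rcases Finset.mem_image.mp (Finset.mem_coe.mp hy) with ⟨j', _, rfl⟩
  rw [← hfg, ← hfg] at e
  exact congrArg (f i) (hg i e)

/-- main counting lemma: a raw step decreases `tri` by at least one and
`used` by exactly `(R \ S).card` -/
lemma rawStep_count {f g : Config V d N} {R S} (h : RawStep f g R S) (hg : Proper g) :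
    (tri g).card + 1 ≤ (tri f).card ∧ (used g).card + (R \ S).card = (used f).card := by
  obtain ⟨hR, hS, hRS, φ, hfix, hinj, himg, hfg⟩ := h
  -- S is fixed setwise by φ
  obtain ⟨⟨iS, hiS⟩, hcardS⟩ := mem_tri.mp (bdry_mem_tri hS)
  have hphiS : S.image φ = S := by
    apply Finset.eq_of_subset_of_card_le
    · intro x hx
      rcases Finset.mem_image.mp hx with ⟨v, hv, rfl⟩
      by_cases hvR : v ∈ R
      · rw [← himg]; exact Finset.mem_image_of_mem φ hvR
      · rw [hfix v hvR]; exact hv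
    · have : (S.image φ).card = S.card := by
        apply Finset.card_image_of_injOn
        exact (injOn_facet hfg hg iS).mono (by exact_mod_cast hiS)
      omega
  have hSf : S ∈ tri f := bdry_mem_tri hS
  have hRf : R ∈ tri f := bdry_mem_tri hR
  constructor
  · -- tri part
    have hsub : tri g ⊆ ((tri f).erase R).image (Finset.image φ) := by
      intro R' hR'
      rcases mem_tri.mp hR' with ⟨⟨i, hi⟩, hcard⟩
      rw [facet_map hfg i] at hi
      set R'' := (facet f i).filter (fun v => φ v ∈ R') with hR''def
      have hR''sub : R'' ⊆ facet f i := Finset.filter_subset _ _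
      have himgR'' : R''.image φ = R' := by
        apply Finset.Subset.antisymm
        · intro x hx
          rcases Finset.mem_image.mp hx with ⟨v, hv, rfl⟩
          exact (Finset.mem_filter.mp hv).2
        · intro x hx
          rcases Finset.mem_image.mp (hi hx) with ⟨v, hv, rfl⟩
          exact Finset.mem_image_of_mem φ (Finset.mem_filter.mpr ⟨hv, hx⟩)
      have hcard'' : R''.card = d := by
        rw [← hcard, ← himgR'']
        exact (Finset.card_image_of_injOn ((injOn_facet hfg hg i).mono
          (by exact_mod_cast hR''sub))).symm
      have hR''tri : R'' ∈ tri f := mem_tri.mpr ⟨⟨i, hR''sub⟩, hcard''⟩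
      by_cases hc : R'' = R
      · -- then R' = S, use S as preimage
        have : R' = S := by rw [← himgR'', hc, himg]
        refine Finset.mem_image.mpr ⟨S, ?_, by rw [hphiS, this]⟩
        exact Finset.mem_erase.mpr ⟨fun e => hRS e.symm, hSf⟩
      · exact Finset.mem_image.mpr ⟨R'', Finset.mem_erase.mpr ⟨hc, hR''tri⟩, himgR''⟩
    have h1 : (tri g).card ≤ ((tri f).erase R).card :=
      le_trans (Finset.card_le_card hsub) (Finset.card_image_le)
    have h2 : ((tri f).erase R).card = (tri f).card - 1 := Finset.card_erase_of_mem hRf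
    have h3 : 1 ≤ (tri f).card := Finset.card_pos.mpr ⟨R, hRf⟩
    omega
  · -- used part
    have hRused : R ⊆ used f := bdry_subset_used hR
    have hSused : S ⊆ used f := bdry_subset_used hS
    have hSg : S ⊆ used g := by
      rw [← himg]
      intro x hx
      rcases Finset.mem_image.mp hx with ⟨v, hv, rfl⟩
      rcases mem_used.mp (hRused hv) with ⟨i, j, rfl⟩
      exact mem_used.mpr ⟨i, j, hfg i j⟩
    have husedeq : used g = used f \ (R \ S) := by
      apply Finset.Subset.antisymm
      · intro x hx
        rcases mem_used.mp hx with ⟨i, j, rfl⟩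
        rw [hfg i j]
        set w := f i j with hw
        have hwused : w ∈ used f := mem_used.mpr ⟨i, j, rfl⟩
        by_cases hwR : w ∈ R
        · have : φ w ∈ S := himg ▸ Finset.mem_image_of_mem φ hwR
          exact Finset.mem_sdiff.mpr ⟨hSused this, fun hc => (Finset.mem_sdiff.mp hc).2 this⟩
        · rw [hfix w hwR]
          exact Finset.mem_sdiff.mpr ⟨hwused, fun hc => hwR (Finset.mem_sdiff.mp hc).1⟩
      · intro x hx
        rcases Finset.mem_sdiff.mp hx with ⟨hxf, hxns⟩
        by_cases hxR : x ∈ R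
        · have : x ∈ S := by
            by_contra hc
            exact hxns (Finset.mem_sdiff.mpr ⟨hxR, hc⟩)
          exact hSg this
        · rcases mem_used.mp hxf with ⟨i, j, rfl⟩
          exact mem_used.mpr ⟨i, j, by rw [hfg i j, hfix _ hxR]⟩
    rw [husedeq, Finset.card_sdiff_of_subset (fun x hx => hRused (Finset.mem_sdiff.mp hx).1)]
    have : (R \ S).card ≤ (used f).card :=
      Finset.card_le_card (fun x hx => hRused (Finset.mem_sdiff.mp hx).1)
    omega

end MogamiPaper
end Part3
section Part4
namespace MogamiPaper
set_option linter.unusedSectionVars false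

variable {V : Type*} [DecidableEq V] [Fintype V] {d N : ℕ}

lemma lc_chain {t g : Config V d N} (h : Relation.ReflTransGen LCStep t g)
    (hg : Proper g) :
    Proper t ∧ ∃ L, (used t).card = (used g).card + L ∧ (tri g).card + L ≤ (tri t).card := by
  induction h with
  | refl => exact ⟨hg, 0, by omega, by omega⟩
  | tail hchain hstep ih =>
    rename_i b c
    obtain ⟨R, S, hraw, hP⟩ := step_rawStep hstep
    have hbp : Proper b := rawStep_proper hraw hg
    obtain ⟨htp, L, hu, ht⟩ := ih hbp
    obtain ⟨hcount1, hcount2⟩ := rawStep_count hraw hg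
    have hcardR : R.card = d := hraw.1.1
    have hinter : (R ∩ S).card = d - 1 := hP
    have hd : 1 ≤ d := by
      by_contra hc
      have : d = 0 := by omega
      subst this
      have h0 : (R ∩ S).card = 0 := hP
      have hR0 : R.card = 0 := hraw.1.1
      have hS0 : S.card = 0 := hraw.2.1.1
      exact hraw.2.2.1 (by rw [Finset.card_eq_zero.mp hR0, Finset.card_eq_zero.mp hS0])
    have hRS : (R \ S).card = 1 := by
      have h1 : (R \ S).card + (R ∩ S).card = R.card := Finset.card_sdiff_add_card_inter R S
      have h2 : (R ∩ S).card ≤ R.card := Finset.card_le_card (Finset.inter_subset_left)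
      omega
    exact ⟨htp, L + 1, by omega, by omega⟩

lemma unite_chain {t : Config (Fin N × Fin (d+1)) d N} (hd : 1 ≤ d)
    (h : Relation.ReflTransGen UniteStep (std d N) t) (hg : Proper t) :
    ∃ u, (used t).card + d * u = (used (std d N)).card ∧
      (tri t).card + u ≤ (tri (std d N)).card := by
  induction h with
  | refl => exact ⟨0, by omega, by omega⟩
  | tail hchain hstep ih =>
    rename_i b c
    obtain ⟨R, S, hraw, hdisj⟩ := uniteStep_rawStep (by omega) hstep
    have hbp : Proper b := rawStep_proper hraw hg
    obtain ⟨u, hu, ht⟩ := ih hbp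
    obtain ⟨hcount1, hcount2⟩ := rawStep_count hraw hg
    have hRS : (R \ S).card = d := by
      rw [Finset.sdiff_eq_self_of_disjoint hdisj]
      exact hraw.1.1
    refine ⟨u + 1, by ring_nf; ring_nf at hu; omega, by omega⟩

lemma represents_counts {g : Config (Fin N × Fin (d+1)) d N} {f : Config V d N}
    (h : Represents g f) (hf : Proper f) :
    Proper g ∧ (used g).card = (used f).card ∧ (tri g).card = (tri f).card := by
  obtain ⟨e, hinj, hfg⟩ := h
  have husedset : ↑(used g) = {x | ∃ i j, g i j = x} := by
    ext x; simp [mem_used]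
  have hinj' : Set.InjOn e ↑(used g) := husedset ▸ hinj
  have hgp : Proper g := by
    intro i j j' hjj
    apply hf i
    rw [hfg, hfg, hjj]
  have husedim : (used g).image e = used f := by
    unfold used
    rw [Finset.image_image]
    congr 1
    funext p
    exact (hfg p.1 p.2).symm
  have hfacetim : ∀ i, facet f i = (facet g i).image e := fun i => facet_map (fun i j => hfg i j) i
  have hfacetused : ∀ i, facet g i ⊆ used g := facet_subset_used g
  have htriused : ∀ R ∈ tri g, R ⊆ used g := by
    intro R hR
    rcases mem_tri.mp hR with ⟨⟨i, hi⟩, _⟩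
    exact hi.trans (hfacetused i)
  have htrim : (tri g).image (Finset.image e) = tri f := by
    apply Finset.Subset.antisymm
    · intro R' hR'
      rcases Finset.mem_image.mp hR' with ⟨R'', hR'', rfl⟩
      rcases mem_tri.mp hR'' with ⟨⟨i, hi⟩, hcard⟩
      refine mem_tri.mpr ⟨⟨i, ?_⟩, ?_⟩
      · rw [hfacetim i]; exact Finset.image_subset_image hi
      · exact (Finset.card_image_of_injOn (hinj'.mono
          (by exact_mod_cast htriused _ hR''))).trans hcard
    · intro R' hR'
      rcases mem_tri.mp hR' with ⟨⟨i, hi⟩, hcard⟩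
      rw [hfacetim i] at hi
      set R'' := (facet g i).filter (fun v => e v ∈ R') with hdef
      have hsub : R'' ⊆ facet g i := Finset.filter_subset _ _
      have hinjfac : Set.InjOn e ↑(facet g i) := hinj'.mono (by exact_mod_cast hfacetused i)
      have himg : R''.image e = R' := by
        apply Finset.Subset.antisymm
        · intro x hx
          rcases Finset.mem_image.mp hx with ⟨v, hv, rfl⟩
          exact (Finset.mem_filter.mp hv).2
        · intro x hx
          rcases Finset.mem_image.mp (hi hx) with ⟨v, hv, rfl⟩
          exact Finset.mem_image_of_mem e (Finset.mem_filter.mpr ⟨hv, hx⟩)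
      have hcard'' : R''.card = d := by
        rw [← himg] at hcard
        exact ((Finset.card_image_of_injOn (hinjfac.mono (by exact_mod_cast hsub))).symm).trans hcard
      exact Finset.mem_image.mpr ⟨R'', mem_tri.mpr ⟨⟨i, hsub⟩, hcard''⟩, himg⟩
  refine ⟨hgp, ?_, ?_⟩
  · rw [← husedim, Finset.card_image_of_injOn hinj']
  · rw [← htrim, Finset.card_image_of_injOn ?_]
    intro R1 h1 R2 h2 he
    have h1' := htriused R1 (Finset.mem_coe.mp h1)
    have h2' := htriused R2 (Finset.mem_coe.mp h2)
    ext v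
    constructor
    · intro hv
      have : e v ∈ R2.image e := he ▸ Finset.mem_image_of_mem e hv
      rcases Finset.mem_image.mp this with ⟨w, hw, hew⟩
      exact (hinj' (Finset.mem_coe.mpr (h2' hw)) (Finset.mem_coe.mpr (h1' hv)) hew) ▸ hw
    · intro hv
      have : e v ∈ R1.image e := he ▸ Finset.mem_image_of_mem e hv
      rcases Finset.mem_image.mp this with ⟨w, hw, hew⟩
      exact (hinj' (Finset.mem_coe.mpr (h1' hw)) (Finset.mem_coe.mpr (h2' hv)) hew) ▸ hw

end MogamiPaper
end Part4
section Part5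
set_option maxRecDepth 100000
namespace MogamiPaper

theorem not_lc : ¬ IsLC (cone AA 6) := by
  rintro ⟨t, g, ⟨hchain, _⟩, hlc, hrep⟩
  have hfp : Proper (cone AA 6) := coneAA_pseudo.1
  obtain ⟨hgp, hused, htri⟩ := represents_counts hrep hfp
  have h7 : (used (cone AA 6)).card = 7 := by decide
  have h18 : (tri (cone AA 6)).card = 18 := by decide
  obtain ⟨htp, L, hL1, hL2⟩ := lc_chain hlc hgp
  obtain ⟨u, hu1, hu2⟩ := unite_chain (by omega) hchain htp
  have h24 : (used (std (2+1) 6 : Config (Fin 6 × Fin (2+1+1)) (2+1) 6)).card = 24 := by decide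
  have h24' : (tri (std (2+1) 6 : Config (Fin 6 × Fin (2+1+1)) (2+1) 6)).card = 24 := by decide
  rw [h24] at hu1
  rw [h24'] at hu2
  rw [hused, h7] at hL1
  rw [htri, h18] at hL2
  omega

end MogamiPaper
end Part5
section Part6
set_option maxRecDepth 100000
namespace MogamiPaper
open Relation

abbrev V6 := Fin 6 × Fin 4

/-- intermediate configurations building the tree of 6 tetrahedra -/
def c1 : Config V6 3 6 :=
  ![![(0,0),(0,1),(0,2),(0,3)], ![(0,0),(0,2),(0,3),(1,3)],
    ![(2,0),(2,1),(2,2),(2,3)], ![(3,0),(3,1),(3,2),(3,3)],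
    ![(4,0),(4,1),(4,2),(4,3)], ![(5,0),(5,1),(5,2),(5,3)]]
def c2 : Config V6 3 6 :=
  ![![(0,0),(0,1),(0,2),(0,3)], ![(0,0),(0,2),(0,3),(1,3)],
    ![(0,0),(0,2),(2,2),(1,3)], ![(3,0),(3,1),(3,2),(3,3)],
    ![(4,0),(4,1),(4,2),(4,3)], ![(5,0),(5,1),(5,2),(5,3)]]
def c3 : Config V6 3 6 :=
  ![![(0,0),(0,1),(0,2),(0,3)], ![(0,0),(0,2),(0,3),(1,3)],
    ![(0,0),(0,2),(2,2),(1,3)], ![(0,0),(2,2),(1,3),(3,3)],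
    ![(4,0),(4,1),(4,2),(4,3)], ![(5,0),(5,1),(5,2),(5,3)]]
def c4 : Config V6 3 6 :=
  ![![(0,0),(0,1),(0,2),(0,3)], ![(0,0),(0,2),(0,3),(1,3)],
    ![(0,0),(0,2),(2,2),(1,3)], ![(0,0),(2,2),(1,3),(3,3)],
    ![(0,0),(2,2),(4,2),(3,3)], ![(5,0),(5,1),(5,2),(5,3)]]
def c5 : Config V6 3 6 :=
  ![![(0,0),(0,1),(0,2),(0,3)], ![(0,0),(0,2),(0,3),(1,3)],
    ![(0,0),(0,2),(2,2),(1,3)], ![(0,0),(2,2),(1,3),(3,3)],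
    ![(0,0),(2,2),(4,2),(3,3)], ![(0,0),(4,2),(3,3),(5,3)]]
def cg : Config V6 3 6 :=
  ![![(0,0),(4,2),(0,2),(5,3)], ![(0,0),(0,2),(5,3),(1,3)],
    ![(0,0),(0,2),(2,2),(1,3)], ![(0,0),(2,2),(1,3),(3,3)],
    ![(0,0),(2,2),(4,2),(3,3)], ![(0,0),(4,2),(3,3),(5,3)]]

lemma reach_color {α : Type*} {G : SimpleGraph α} {c : α → Bool}
    (h : ∀ a b, G.Adj a b → c a = c b) {x y : α} (hr : G.Reachable x y) : c x = c y := by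
  rcases hr with ⟨w⟩
  induction w with
  | nil => rfl
  | cons hadj _ ih => exact (h _ _ hadj).trans ih

lemma adj_card {V : Type*} [DecidableEq V] {d N : ℕ} {f : Config V d N} {a b : Fin N}
    (h : (dualGraph f).Adj a b) : d ≤ ((facet f a) ∩ (facet f b)).card := by
  rw [dualGraph, SimpleGraph.fromRel_adj] at h
  rcases h.2 with ⟨R, hc, h1, h2⟩ | ⟨R, hc, h1, h2⟩
  · exact le_trans (le_of_eq hc.symm) (Finset.card_le_card (Finset.subset_inter h1 h2))
  · exact le_trans (le_of_eq hc.symm) (Finset.card_le_card (Finset.subset_inter h2 h1))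

/-- no reachability across a color class -/
lemma not_reach {d : ℕ} {f : Config V6 d 6} {c : Fin 6 → Bool}
    (hcard : ∀ a b : Fin 6, d ≤ ((facet f a) ∩ (facet f b)).card → c a = c b)
    {x y : Fin 6} (hxy : c x ≠ c y) : ¬ (dualGraph f).Reachable x y :=
  fun hr => hxy (reach_color (fun a b hadj => hcard a b (adj_card hadj)) hr)

/-- helper to package a UNITE step -/
lemma mk_unite (f g : Config V6 3 6) (R S : Finset V6) (φ : V6 → V6) (c : Fin 6 → Bool)
    (h1 : IsBdryRidge f R) (h2 : IsBdryRidge f S) (h3 : Disjoint R S)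
    (hcard : ∀ a b : Fin 6, 3 ≤ ((facet f a) ∩ (facet f b)).card → c a = c b)
    (hcolor : ∀ i ∈ cells f R, ∀ i' ∈ cells f S, c i ≠ c i')
    (h4 : ∀ v, v ∉ R → φ v = v) (h5 : (R.image φ).card = R.card) (h6 : R.image φ = S)
    (h7 : ∀ i j, g i j = φ (f i j)) : UniteStep f g :=
  ⟨R, S, h1, h2, h3,
    fun i hi i' hi' => not_reach hcard (hcolor i hi i' hi'),
    φ, h4, Finset.card_image_iff.mp h5, h6, h7⟩

theorem u1 : UniteStep (std 3 6) c1 :=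
  mk_unite (std 3 6) c1 {(1,0),(1,1),(1,2)} {(0,0),(0,2),(0,3)} 
    (fun v => if v = (1,0) then (0,0) else if v = (1,1) then (0,2) else if v = (1,2) then (0,3) else v)
    (fun a => decide (a.val ≤ 0))
    ⟨by decide, by decide⟩ ⟨by decide, by decide⟩ (by decide)
    (by decide) (by decide) (by decide) (by decide) (by decide) (by decide)

theorem u2 : UniteStep c1 c2 :=
  mk_unite c1 c2 {(2,0),(2,1),(2,3)} {(0,0),(0,2),(1,3)}
    (fun v => if v = (2,0) then (0,0) else if v = (2,1) then (0,2) else if v = (2,3) then (1,3) else v)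
    (fun a => decide (a.val ≤ 1))
    ⟨by decide, by decide⟩ ⟨by decide, by decide⟩ (by decide)
    (by decide) (by decide) (by decide) (by decide) (by decide) (by decide)

theorem u3 : UniteStep c2 c3 :=
  mk_unite c2 c3 {(3,0),(3,1),(3,2)} {(0,0),(2,2),(1,3)}
    (fun v => if v = (3,0) then (0,0) else if v = (3,1) then (2,2) else if v = (3,2) then (1,3) else v)
    (fun a => decide (a.val ≤ 2))
    ⟨by decide, by decide⟩ ⟨by decide, by decide⟩ (by decide)
    (by decide) (by decide) (by decide) (by decide) (by decide) (by decide)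

theorem u4 : UniteStep c3 c4 :=
  mk_unite c3 c4 {(4,0),(4,1),(4,3)} {(0,0),(2,2),(3,3)}
    (fun v => if v = (4,0) then (0,0) else if v = (4,1) then (2,2) else if v = (4,3) then (3,3) else v)
    (fun a => decide (a.val ≤ 3))
    ⟨by decide, by decide⟩ ⟨by decide, by decide⟩ (by decide)
    (by decide) (by decide) (by decide) (by decide) (by decide) (by decide)

theorem u5 : UniteStep c4 c5 :=
  mk_unite c4 c5 {(5,0),(5,1),(5,2)} {(0,0),(4,2),(3,3)}
    (fun v => if v = (5,0) then (0,0) else if v = (5,1) then (4,2) else if v = (5,2) then (3,3) else v)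
    (fun a => decide (a.val ≤ 4))
    ⟨by decide, by decide⟩ ⟨by decide, by decide⟩ (by decide)
    (by decide) (by decide) (by decide) (by decide) (by decide) (by decide)

theorem mog : MogamiStep c5 cg :=
  ⟨{(0,0),(0,1),(0,3)}, {(0,0),(4,2),(5,3)}, ⟨by decide, by decide⟩, ⟨by decide, by decide⟩,
    by decide, by decide,
    (fun v => if v = (0,1) then (4,2) else if v = (0,3) then (5,3) else v),
    by decide, Finset.card_image_iff.mp (by decide), by decide, by decide⟩

theorem c5_connected : (dualGraph c5).Connected := by
  have adj : ∀ (a b : Fin 6) (R : Finset V6), a ≠ b → R.card = 3 → R ⊆ facet c5 a →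
      R ⊆ facet c5 b → (dualGraph c5).Adj a b := by
    intro a b R hne hc h1 h2
    rw [dualGraph, SimpleGraph.fromRel_adj]
    exact ⟨hne, Or.inl ⟨R, hc, h1, h2⟩⟩
  have a01 := adj 0 1 {(0,0),(0,2),(0,3)} (by decide) (by decide) (by decide) (by decide)
  have a12 := adj 1 2 {(0,0),(0,2),(1,3)} (by decide) (by decide) (by decide) (by decide)
  have a23 := adj 2 3 {(0,0),(2,2),(1,3)} (by decide) (by decide) (by decide) (by decide)
  have a34 := adj 3 4 {(0,0),(2,2),(3,3)} (by decide) (by decide) (by decide) (by decide)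
  have a45 := adj 4 5 {(0,0),(4,2),(3,3)} (by decide) (by decide) (by decide) (by decide)
  have hreach : ∀ i : Fin 6, (dualGraph c5).Reachable 0 i := by
    intro i
    fin_cases i
    · exact SimpleGraph.Reachable.refl _
    · exact a01.reachable
    · exact a01.reachable.trans a12.reachable
    · exact (a01.reachable.trans a12.reachable).trans a23.reachable
    · exact ((a01.reachable.trans a12.reachable).trans a23.reachable).trans a34.reachable
    · exact (((a01.reachable.trans a12.reachable).trans a23.reachable).trans a34.reachable).trans
        a45.reachable
  exact (SimpleGraph.connected_iff _).mpr ⟨fun a b => (hreach a).symm.trans (hreach b), ⟨0⟩⟩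

def emap : V6 → Fin 7 :=
  ![![6,6,1,6],![6,6,6,4],![6,6,2,6],![6,6,6,5],![6,6,0,6],![6,6,6,3]].uncurry

theorem mogami : IsMogami (cone AA 6) := by
  refine ⟨c5, cg, ⟨?_, c5_connected⟩, ReflTransGen.single mog, emap, ?_, by decide⟩
  · exact ((((ReflTransGen.single u1).tail u2).tail u3).tail u4).tail u5
  · intro x hx y hy h
    obtain ⟨i, j, rfl⟩ := hx
    obtain ⟨i', j', rfl⟩ := hy
    revert h
    revert i j i' j'
    decide

end MogamiPaper
end Part6
section Part7a
namespace MogamiPaper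
open Real

/-- planar coordinates of the 7 vertices (vertex 6 unused) -/
def q1 : Fin 7 → ℝ := ![2,-4,2,1,-2,1,0]
def q2 : Fin 7 → ℝ := ![2,2,-4,1,1,-2,0]

noncomputable def us (x : Fin 7 → ℝ) : ℝ := ∑ v, x v * q1 v
noncomputable def vs (x : Fin 7 → ℝ) : ℝ := ∑ v, x v * q2 v

/-- gauge of the triangle with vertices (1,1), (-2,1), (1,-2) -/
noncomputable def mu (s t : ℝ) : ℝ := max s (max t (-s-t))

lemma mu_smul {c : ℝ} (hc : 0 ≤ c) (s t : ℝ) : mu (c*s) (c*t) = c * mu s t := by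
  unfold mu
  rw [show -(c*s)-(c*t) = c*(-s-t) by ring, ← mul_max_of_nonneg _ _ hc,
    ← mul_max_of_nonneg _ _ hc]

lemma mu_le_left (s t : ℝ) : s ≤ mu s t := le_max_left _ _
lemma mu_le_mid (s t : ℝ) : t ≤ mu s t := le_trans (le_max_left _ _) (le_max_right _ _)
lemma mu_le_right (s t : ℝ) : -s-t ≤ mu s t := le_trans (le_max_right _ _) (le_max_right _ _)

lemma mu_pos {s t : ℝ} (h : ¬ (s = 0 ∧ t = 0)) : 0 < mu s t := by
  by_contra hc
  push_neg at hc
  have h1 := mu_le_left s t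
  have h2 := mu_le_mid s t
  have h3 := mu_le_right s t
  exact h ⟨by linarith, by linarith⟩

/-- membership in a single closed triangle of the annulus -/
def inT (i : Fin 6) (x : Fin 7 → ℝ) : Prop :=
  (∀ v, 0 ≤ x v) ∧ (∑ v, x v) = 1 ∧ ∀ v, v ∉ facet AA i → x v = 0

lemma mem_realization {x : Fin 7 → ℝ} : x ∈ realization AA ↔ ∃ i, inT i x := by
  unfold realization inT
  simp only [Set.mem_setOf_eq]
  constructor
  · rintro ⟨h1, h2, i, h3⟩
    refine ⟨i, h1, h2, fun v hv => ?_⟩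
    by_contra hc
    exact hv (h3 v hc)
  · rintro ⟨i, h1, h2, h3⟩
    refine ⟨h1, h2, i, fun v hv => ?_⟩
    by_contra hc
    exact hv (h3 v hc)

lemma sum7 (x : Fin 7 → ℝ) : (∑ v, x v) = x 0 + x 1 + x 2 + x 3 + x 4 + x 5 + x 6 := by
  simp [Fin.sum_univ_seven]

lemma us_eq (x : Fin 7 → ℝ) :
    us x = 2*x 0 - 4*x 1 + 2*x 2 + x 3 - 2*x 4 + x 5 := by
  unfold us q1
  simp [Fin.sum_univ_seven, show (![2,-4,2,1,-2,1,0] : Fin 7 → ℝ) 5 = 1 from rfl,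
    show (![2,-4,2,1,-2,1,0] : Fin 7 → ℝ) 6 = 0 from rfl]
  ring

lemma vs_eq (x : Fin 7 → ℝ) :
    vs x = 2*x 0 + 2*x 1 - 4*x 2 + x 3 + x 4 - 2*x 5 := by
  unfold vs q2
  simp [Fin.sum_univ_seven, show (![2,2,-4,1,1,-2,0] : Fin 7 → ℝ) 5 = -2 from rfl,
    show (![2,2,-4,1,1,-2,0] : Fin 7 → ℝ) 6 = 0 from rfl]
  ring

end MogamiPaper
end Part7a
section Part7b
namespace MogamiPaper
open Real

@[simp] lemma vec7_0 (a b c d e f g : ℝ) : (![a,b,c,d,e,f,g] : Fin 7 → ℝ) 0 = a := rfl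
@[simp] lemma vec7_1 (a b c d e f g : ℝ) : (![a,b,c,d,e,f,g] : Fin 7 → ℝ) 1 = b := rfl
@[simp] lemma vec7_2 (a b c d e f g : ℝ) : (![a,b,c,d,e,f,g] : Fin 7 → ℝ) 2 = c := rfl
@[simp] lemma vec7_3 (a b c d e f g : ℝ) : (![a,b,c,d,e,f,g] : Fin 7 → ℝ) 3 = d := rfl
@[simp] lemma vec7_4 (a b c d e f g : ℝ) : (![a,b,c,d,e,f,g] : Fin 7 → ℝ) 4 = e := rfl
@[simp] lemma vec7_5 (a b c d e f g : ℝ) : (![a,b,c,d,e,f,g] : Fin 7 → ℝ) 5 = f := rfl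
@[simp] lemma vec7_6 (a b c d e f g : ℝ) : (![a,b,c,d,e,f,g] : Fin 7 → ℝ) 6 = g := rfl

lemma mu_le_two {x : Fin 7 → ℝ} (hp : ∀ v, 0 ≤ x v) (hsum : (∑ v, x v) = 1) :
    mu (us x) (vs x) ≤ 2 := by
  have h7 : x 0+x 1+x 2+x 3+x 4+x 5+x 6 = 1 := by rw [← sum7]; exact hsum
  have hu := us_eq x
  have hv := vs_eq x
  have n0 := hp 0; have n1 := hp 1; have n2 := hp 2; have n3 := hp 3
  have n4 := hp 4; have n5 := hp 5; have n6 := hp 6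
  refine max_le (by linarith) (max_le (by linarith) (by linarith))

lemma mu_ge_one {x : Fin 7 → ℝ} {i : Fin 6} (h : inT i x) : 1 ≤ mu (us x) (vs x) := by
  obtain ⟨hp, hsum, hz⟩ := h
  have h7 : x 0+x 1+x 2+x 3+x 4+x 5+x 6 = 1 := by rw [← sum7]; exact hsum
  have hu := us_eq x
  have hv := vs_eq x
  have n0 := hp 0; have n1 := hp 1; have n2 := hp 2; have n3 := hp 3
  have n4 := hp 4; have n5 := hp 5; have n6 := hp 6
  fin_cases i
  ·
    have z2 := hz 2 (by decide)
    have z4 := hz 4 (by decide)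
    have z5 := hz 5 (by decide)
    have z6 := hz 6 (by decide)
    exact le_trans (by linarith) (mu_le_mid (us x) (vs x))
  ·
    have z0 := hz 0 (by decide)
    have z2 := hz 2 (by decide)
    have z5 := hz 5 (by decide)
    have z6 := hz 6 (by decide)
    exact le_trans (by linarith) (mu_le_mid (us x) (vs x))
  ·
    have z0 := hz 0 (by decide)
    have z3 := hz 3 (by decide)
    have z5 := hz 5 (by decide)
    have z6 := hz 6 (by decide)
    exact le_trans (by linarith) (mu_le_right (us x) (vs x))
  ·
    have z0 := hz 0 (by decide)
    have z1 := hz 1 (by decide)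
    have z3 := hz 3 (by decide)
    have z6 := hz 6 (by decide)
    exact le_trans (by linarith) (mu_le_right (us x) (vs x))
  ·
    have z1 := hz 1 (by decide)
    have z3 := hz 3 (by decide)
    have z4 := hz 4 (by decide)
    have z6 := hz 6 (by decide)
    exact le_trans (by linarith) (mu_le_left (us x) (vs x))
  ·
    have z1 := hz 1 (by decide)
    have z2 := hz 2 (by decide)
    have z4 := hz 4 (by decide)
    have z6 := hz 6 (by decide)
    exact le_trans (by linarith) (mu_le_left (us x) (vs x))

end MogamiPaper
end Part7b
section Part7c
namespace MogamiPaper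
open Real
open scoped Classical

noncomputable def bary (s t : ℝ) : Fin 7 → ℝ :=
  if s ≤ t ∧ 0 ≤ s + 2*t then
    if 6 ≤ s + 5*t then ![(s+5*t-6)/6, (t-s)/6, 0, 2-t, 0, 0, 0]
    else ![0, t-1, 0, (s+2*t)/3, (6-s-5*t)/3, 0, 0]
  else if t ≤ s ∧ 0 ≤ 2*s + t then
    if 4*s - 6 ≤ t then ![s-1, 0, 0, (6-4*s+t)/3, 0, (s-t)/3, 0]
    else ![(2*s+t)/6, 0, (4*s-t-6)/6, 0, 0, 2-s, 0]
  else
    if 4*(-s-t) - 6 ≤ s then ![0, 0, (-s-t)-1, 0, ((-s-t)-s)/3, (6-4*(-s-t)+s)/3, 0]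
    else ![0, (4*(-s-t)-s-6)/6, (2*(-s-t)+s)/6, 0, 2-(-s-t), 0, 0]

set_option maxHeartbeats 1000000 in
lemma bary_spec (s t : ℝ) (hm1 : 1 ≤ mu s t) (hm2 : mu s t ≤ 2) :
    (∃ i, inT i (bary s t)) ∧ us (bary s t) = s ∧ vs (bary s t) = t := by
  have hml := mu_le_left s t
  have hmm := mu_le_mid s t
  have hmr := mu_le_right s t
  unfold bary
  split_ifs with h1 h2 h3 h4 h5
  · -- T0
    have ht2 : t ≤ 2 := le_trans hmm hm2
    refine ⟨⟨0, ?_, ?_, ?_⟩, ?_, ?_⟩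
    · intro v; fin_cases v <;> simp <;> linarith [h1.1, h1.2, h2]
    · rw [sum7]; simp; ring
    · intro v hv; fin_cases v <;> first | rfl | exact absurd (by decide) hv
    · rw [us_eq]; simp; ring
    · rw [vs_eq]; simp; ring
  · -- T1
    have htmu : mu s t ≤ t := max_le h1.1 (max_le le_rfl (by linarith [h1.2]))
    refine ⟨⟨1, ?_, ?_, ?_⟩, ?_, ?_⟩
    · intro v; fin_cases v <;> simp <;> linarith [h1.1, h1.2]
    · rw [sum7]; simp; ring
    · intro v hv; fin_cases v <;> first | rfl | exact absurd (by decide) hv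
    · rw [us_eq]; simp; ring
    · rw [vs_eq]; simp; ring
  · -- T5
    have hsmu : mu s t ≤ s := max_le le_rfl (max_le h3.1 (by linarith [h3.2]))
    refine ⟨⟨5, ?_, ?_, ?_⟩, ?_, ?_⟩
    · intro v; fin_cases v <;> simp <;> linarith [h3.1, h3.2, h4]
    · rw [sum7]; simp; ring
    · intro v hv; fin_cases v <;> first | rfl | exact absurd (by decide) hv
    · rw [us_eq]; simp; ring
    · rw [vs_eq]; simp; ring
  · -- T4
    have hs2 : s ≤ 2 := le_trans hml hm2
    refine ⟨⟨4, ?_, ?_, ?_⟩, ?_, ?_⟩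
    · intro v; fin_cases v <;> simp <;> linarith [h3.1, h3.2]
    · rw [sum7]; simp; ring
    · intro v hv; fin_cases v <;> first | rfl | exact absurd (by decide) hv
    · rw [us_eq]; simp; ring
    · rw [vs_eq]; simp; ring
  · -- T3
    have hw : s ≤ -s-t ∧ t ≤ -s-t := by
      rcases not_and_or.mp h1 with h | h <;> rcases not_and_or.mp h3 with h' | h' <;>
        push_neg at h h' <;> exact ⟨by linarith, by linarith⟩
    have hwmu : mu s t ≤ -s-t := max_le hw.1 (max_le hw.2 le_rfl)
    refine ⟨⟨3, ?_, ?_, ?_⟩, ?_, ?_⟩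
    · intro v; fin_cases v <;> simp <;> linarith [hw.1, hw.2, h5]
    · rw [sum7]; simp; ring
    · intro v hv; fin_cases v <;> first | rfl | exact absurd (by decide) hv
    · rw [us_eq]; simp; ring
    · rw [vs_eq]; simp; ring
  · -- T2
    have hw : s ≤ -s-t ∧ t ≤ -s-t := by
      rcases not_and_or.mp h1 with h | h <;> rcases not_and_or.mp h3 with h' | h' <;>
        push_neg at h h' <;> exact ⟨by linarith, by linarith⟩
    refine ⟨⟨2, ?_, ?_, ?_⟩, ?_, ?_⟩
    · intro v; fin_cases v <;> simp <;> linarith [hw.1, hw.2, h5]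
    · rw [sum7]; simp; ring
    · intro v hv; fin_cases v <;> first | rfl | exact absurd (by decide) hv
    · rw [us_eq]; simp; ring
    · rw [vs_eq]; simp; ring

end MogamiPaper
end Part7c
section Part7d
namespace MogamiPaper
open Real

set_option maxHeartbeats 4000000 in
lemma canon {x : Fin 7 → ℝ} {i : Fin 6} (h : inT i x) : bary (us x) (vs x) = x := by
  obtain ⟨hp, hsum, hz⟩ := h
  have h7 : x 0+x 1+x 2+x 3+x 4+x 5+x 6 = 1 := by rw [← sum7]; exact hsum
  have hu := us_eq x
  have hv := vs_eq x
  have n0 := hp 0; have n1 := hp 1; have n2 := hp 2; have n3 := hp 3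
  have n4 := hp 4; have n5 := hp 5; have n6 := hp 6
  fin_cases i
  ·
    have z2 := hz 2 (by decide)
    have z4 := hz 4 (by decide)
    have z5 := hz 5 (by decide)
    have z6 := hz 6 (by decide)
    unfold bary
    split_ifs <;> funext v <;> fin_cases v <;> simp <;>
      first
      | linarith
      | (rcases not_and_or.mp ‹¬(us x ≤ vs x ∧ 0 ≤ us x + 2 * vs x)› with h' | h' <;>
          push_neg at h' <;>
          first
          | linarith
          | (rcases not_and_or.mp ‹¬(vs x ≤ us x ∧ 0 ≤ 2 * us x + vs x)› with h'' | h'' <;>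
              push_neg at h'' <;> linarith))
  ·
    have z0 := hz 0 (by decide)
    have z2 := hz 2 (by decide)
    have z5 := hz 5 (by decide)
    have z6 := hz 6 (by decide)
    unfold bary
    split_ifs <;> funext v <;> fin_cases v <;> simp <;>
      first
      | linarith
      | (rcases not_and_or.mp ‹¬(us x ≤ vs x ∧ 0 ≤ us x + 2 * vs x)› with h' | h' <;>
          push_neg at h' <;>
          first
          | linarith
          | (rcases not_and_or.mp ‹¬(vs x ≤ us x ∧ 0 ≤ 2 * us x + vs x)› with h'' | h'' <;>
              push_neg at h'' <;> linarith))
  ·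
    have z0 := hz 0 (by decide)
    have z3 := hz 3 (by decide)
    have z5 := hz 5 (by decide)
    have z6 := hz 6 (by decide)
    unfold bary
    split_ifs <;> funext v <;> fin_cases v <;> simp <;>
      first
      | linarith
      | (rcases not_and_or.mp ‹¬(us x ≤ vs x ∧ 0 ≤ us x + 2 * vs x)› with h' | h' <;>
          push_neg at h' <;>
          first
          | linarith
          | (rcases not_and_or.mp ‹¬(vs x ≤ us x ∧ 0 ≤ 2 * us x + vs x)› with h'' | h'' <;>
              push_neg at h'' <;> linarith))
  ·
    have z0 := hz 0 (by decide)
    have z1 := hz 1 (by decide)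
    have z3 := hz 3 (by decide)
    have z6 := hz 6 (by decide)
    unfold bary
    split_ifs <;> funext v <;> fin_cases v <;> simp <;>
      first
      | linarith
      | (rcases not_and_or.mp ‹¬(us x ≤ vs x ∧ 0 ≤ us x + 2 * vs x)› with h' | h' <;>
          push_neg at h' <;>
          first
          | linarith
          | (rcases not_and_or.mp ‹¬(vs x ≤ us x ∧ 0 ≤ 2 * us x + vs x)› with h'' | h'' <;>
              push_neg at h'' <;> linarith))
  ·
    have z1 := hz 1 (by decide)
    have z3 := hz 3 (by decide)
    have z4 := hz 4 (by decide)
    have z6 := hz 6 (by decide)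
    unfold bary
    split_ifs <;> funext v <;> fin_cases v <;> simp <;>
      first
      | linarith
      | (rcases not_and_or.mp ‹¬(us x ≤ vs x ∧ 0 ≤ us x + 2 * vs x)› with h' | h' <;>
          push_neg at h' <;>
          first
          | linarith
          | (rcases not_and_or.mp ‹¬(vs x ≤ us x ∧ 0 ≤ 2 * us x + vs x)› with h'' | h'' <;>
              push_neg at h'' <;> linarith))
  ·
    have z1 := hz 1 (by decide)
    have z2 := hz 2 (by decide)
    have z4 := hz 4 (by decide)
    have z6 := hz 6 (by decide)
    unfold bary
    split_ifs <;> funext v <;> fin_cases v <;> simp <;>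
      first
      | linarith
      | (rcases not_and_or.mp ‹¬(us x ≤ vs x ∧ 0 ≤ us x + 2 * vs x)› with h' | h' <;>
          push_neg at h' <;>
          first
          | linarith
          | (rcases not_and_or.mp ‹¬(vs x ≤ us x ∧ 0 ≤ 2 * us x + vs x)› with h'' | h'' <;>
              push_neg at h'' <;> linarith))

end MogamiPaper
end Part7d
section Part7e
namespace MogamiPaper
open Real Metric

noncomputable def pt (a b : ℝ) : EuclideanSpace ℝ (Fin 2) :=
  (WithLp.equiv 2 (Fin 2 → ℝ)).symm ![a,b]

noncomputable def nr (s t : ℝ) : ℝ := Real.sqrt (s^2 + t^2)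

noncomputable def Fmap (x : Fin 7 → ℝ) : EuclideanSpace ℝ (Fin 2) :=
  pt (mu (us x) (vs x) / nr (us x) (vs x) * us x)
     (mu (us x) (vs x) / nr (us x) (vs x) * vs x)

lemma pt_norm (a b : ℝ) : ‖pt a b‖ = Real.sqrt (a^2 + b^2) := by
  rw [EuclideanSpace.norm_eq]
  norm_num [pt, Fin.sum_univ_two, sq_abs]

lemma mu_zero : mu 0 0 = 0 := by simp [mu]

lemma nr_pos {s t : ℝ} (h : 1 ≤ mu s t) : 0 < nr s t := by
  apply Real.sqrt_pos.mpr
  have hne : ¬ (s = 0 ∧ t = 0) := by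
    rintro ⟨rfl, rfl⟩
    rw [mu_zero] at h
    linarith
  rcases not_and_or.mp hne with h' | h'
  · have : 0 < s^2 := by positivity
    nlinarith [sq_nonneg t]
  · have : 0 < t^2 := by positivity
    nlinarith [sq_nonneg s]

lemma nr_eq_norm_smul {c a b : ℝ} (hc : 0 ≤ c) : nr (c*a) (c*b) = c * nr a b := by
  unfold nr
  rw [show (c*a)^2 + (c*b)^2 = c^2 * (a^2+b^2) by ring, Real.sqrt_mul (by positivity),
    Real.sqrt_sq hc]

lemma norm_Fmap {x : Fin 7 → ℝ} (hm1 : 1 ≤ mu (us x) (vs x)) :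
    ‖Fmap x‖ = mu (us x) (vs x) := by
  have hn := nr_pos hm1
  rw [Fmap, pt_norm,
    show ((mu (us x) (vs x) / nr (us x) (vs x) * us x)^2 +
      (mu (us x) (vs x) / nr (us x) (vs x) * vs x)^2) =
      (mu (us x) (vs x) / nr (us x) (vs x))^2 * ((us x)^2 + (vs x)^2) by ring,
    Real.sqrt_mul (by positivity), Real.sqrt_sq (by positivity)]
  have : Real.sqrt ((us x)^2 + (vs x)^2) = nr (us x) (vs x) := rfl
  rw [this]
  field_simp

/-- the annulus -/
noncomputable def ann : Set (EuclideanSpace ℝ (Fin 2)) :=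
  Metric.closedBall 0 2 \ Metric.ball 0 1

lemma mem_ann {y : EuclideanSpace ℝ (Fin 2)} : y ∈ ann ↔ 1 ≤ ‖y‖ ∧ ‖y‖ ≤ 2 := by
  simp [ann, Metric.mem_closedBall, Metric.mem_ball, dist_zero_right]
  tauto

lemma Fmap_mem {x : Fin 7 → ℝ} (hx : x ∈ realization AA) : Fmap x ∈ ann := by
  rcases mem_realization.mp hx with ⟨i, hi⟩
  have hm1 := mu_ge_one hi
  have hm2 := mu_le_two hi.1 hi.2.1
  rw [mem_ann, norm_Fmap hm1]
  exact ⟨hm1, hm2⟩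

lemma Fmap_inj {x x' : Fin 7 → ℝ} (hx : x ∈ realization AA) (hx' : x' ∈ realization AA)
    (h : Fmap x = Fmap x') : x = x' := by
  rcases mem_realization.mp hx with ⟨i, hi⟩
  rcases mem_realization.mp hx' with ⟨i', hi'⟩
  have hm1 := mu_ge_one hi
  have hm2 := mu_le_two hi.1 hi.2.1
  have hm1' := mu_ge_one hi'
  have hn := nr_pos hm1
  have hn' := nr_pos hm1'
  have hmeq : mu (us x) (vs x) = mu (us x') (vs x') := by
    rw [← norm_Fmap hm1, ← norm_Fmap hm1', h]
  have h0 : Fmap x 0 = Fmap x' 0 := by rw [h]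
  have h1 : Fmap x 1 = Fmap x' 1 := by rw [h]
  have e0 : mu (us x) (vs x) / nr (us x) (vs x) * us x =
      mu (us x') (vs x') / nr (us x') (vs x') * us x' := h0
  have e1 : mu (us x) (vs x) / nr (us x) (vs x) * vs x =
      mu (us x') (vs x') / nr (us x') (vs x') * vs x' := h1
  set m := mu (us x) (vs x) with hm
  set n := nr (us x) (vs x) with hndef
  set n' := nr (us x') (vs x') with hn'def
  rw [← hmeq] at e0 e1
  have hmpos : 0 < m := by linarith
  have hs' : us x' = (n'/n) * us x := by
    field_simp at e0 ⊢
    nlinarith [e0]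
  have ht' : vs x' = (n'/n) * vs x := by
    field_simp at e1 ⊢
    nlinarith [e1]
  have hcnn : 0 ≤ n'/n := by positivity
  have hmusm : mu (us x') (vs x') = (n'/n) * m := by
    rw [hs', ht', mu_smul hcnn, hm]
  have hc1 : n'/n = 1 := by
    rw [hmusm] at hmeq
    have : (n'/n) * m = 1 * m := by linarith
    exact mul_right_cancel₀ (by linarith) this
  have hsx : us x' = us x := by rw [hs', hc1, one_mul]
  have htx : vs x' = vs x := by rw [ht', hc1, one_mul]
  rw [← canon hi, ← canon hi', hsx, htx]

lemma Fmap_surj {y : EuclideanSpace ℝ (Fin 2)} (hy : y ∈ ann) :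
    ∃ x ∈ realization AA, Fmap x = y := by
  rcases mem_ann.mp hy with ⟨h1, h2⟩
  set a := y 0 with ha
  set b := y 1 with hb
  have hnorm : ‖y‖ = Real.sqrt (a^2 + b^2) := by
    rw [EuclideanSpace.norm_eq]
    norm_num [Fin.sum_univ_two, sq_abs, ← ha, ← hb]
  have hyne : ¬ (a = 0 ∧ b = 0) := by
    rintro ⟨ha0, hb0⟩
    rw [hnorm, ha0, hb0] at h1
    norm_num at h1
  have hmpos : 0 < mu a b := mu_pos hyne
  set c := ‖y‖ / mu a b with hc
  have hcpos : 0 < c := by positivity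
  have hmu' : mu (c*a) (c*b) = ‖y‖ := by
    rw [mu_smul hcpos.le, hc]
    field_simp
  obtain ⟨⟨i, hin⟩, hus, hvs⟩ := bary_spec (c*a) (c*b) (hmu' ▸ h1) (hmu' ▸ h2)
  refine ⟨bary (c*a) (c*b), mem_realization.mpr ⟨i, hin⟩, ?_⟩
  have hnr : nr (c*a) (c*b) = c * Real.sqrt (a^2+b^2) := nr_eq_norm_smul hcpos.le
  have hsq : Real.sqrt (a^2+b^2) = ‖y‖ := hnorm.symm
  have hynorm : 0 < ‖y‖ := by linarith
  unfold Fmap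
  rw [hus, hvs, hmu', hnr, hsq]
  have hca : ‖y‖ / (c * ‖y‖) * (c * a) = a := by field_simp
  have hcb : ‖y‖ / (c * ‖y‖) * (c * b) = b := by field_simp
  rw [hca, hcb]
  ext j
  fin_cases j
  · rfl
  · rfl

end MogamiPaper
end Part7e
section Part7f
namespace MogamiPaper
open Real Metric

lemma cont_us : Continuous us :=
  continuous_finset_sum _ fun v _ => (continuous_apply v).mul continuous_const

lemma cont_vs : Continuous vs :=
  continuous_finset_sum _ fun v _ => (continuous_apply v).mul continuous_const

lemma cont_mu : Continuous fun x => mu (us x) (vs x) :=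
  cont_us.max (cont_vs.max (cont_us.neg.sub cont_vs))

lemma cont_nr : Continuous fun x => nr (us x) (vs x) :=
  Real.continuous_sqrt.comp ((cont_us.pow 2).add (cont_vs.pow 2))

lemma contAt_Fmap {x₀ : Fin 7 → ℝ} (h : nr (us x₀) (vs x₀) ≠ 0) : ContinuousAt Fmap x₀ := by
  have hg1 : ContinuousAt (fun x => mu (us x) (vs x) / nr (us x) (vs x) * us x) x₀ :=
    (cont_mu.continuousAt.div cont_nr.continuousAt h).mul cont_us.continuousAt
  have hg2 : ContinuousAt (fun x => mu (us x) (vs x) / nr (us x) (vs x) * vs x) x₀ :=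
    (cont_mu.continuousAt.div cont_nr.continuousAt h).mul cont_vs.continuousAt
  have hvec : ContinuousAt (fun x => (![mu (us x) (vs x) / nr (us x) (vs x) * us x,
      mu (us x) (vs x) / nr (us x) (vs x) * vs x] : Fin 2 → ℝ)) x₀ := by
    apply continuousAt_pi.mpr
    intro j
    fin_cases j
    · simpa using hg1
    · simpa using hg2
  exact ((PiLp.continuous_toLp 2 (fun _ : Fin 2 => ℝ)).continuousAt).comp hvec

lemma real_closed : IsClosed (realization AA) := by
  have : realization AA = ⋃ i : Fin 6, {x | inT i x} := by
    ext x
    rw [Set.mem_iUnion]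
    exact mem_realization.trans (by simp [Set.mem_setOf_eq])
  rw [this]
  apply isClosed_iUnion_of_finite
  intro i
  have : {x | inT i x} = (⋂ v, {x : Fin 7 → ℝ | 0 ≤ x v}) ∩
      ({x : Fin 7 → ℝ | (∑ v, x v) = 1} ∩
        ⋂ v, ⋂ (_ : v ∉ facet AA i), {x : Fin 7 → ℝ | x v = 0}) := by
    ext x
    simp [inT, Set.mem_iInter, Set.mem_setOf_eq]
  rw [this]
  refine IsClosed.inter (isClosed_iInter fun v =>
      isClosed_le continuous_const (continuous_apply v))
    (IsClosed.inter (isClosed_eq (continuous_finset_sum _ fun v _ => continuous_apply v)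
      continuous_const)
    (isClosed_iInter fun v => isClosed_iInter fun _ =>
      isClosed_eq (continuous_apply v) continuous_const))

lemma real_compact : IsCompact (realization AA) := by
  apply IsCompact.of_isClosed_subset (isCompact_univ_pi fun _ : Fin 7 => (isCompact_Icc : IsCompact (Set.Icc (0:ℝ) 1)))
    real_closed
  rintro x ⟨h1, h2, -⟩ v -
  refine ⟨h1 v, ?_⟩
  have : x v ≤ ∑ w, x w := Finset.single_le_sum (fun w _ => h1 w) (Finset.mem_univ v)
  linarith

noncomputable def FS (p : realization AA) : ann := ⟨Fmap p.1, Fmap_mem p.2⟩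

lemma cont_FS : Continuous FS := by
  apply Continuous.subtype_mk
  rw [continuous_iff_continuousAt]
  intro p
  have hp := p.2
  rcases mem_realization.mp hp with ⟨i, hi⟩
  have hm1 := mu_ge_one hi
  exact (contAt_Fmap (ne_of_gt (nr_pos hm1))).comp continuousAt_subtype_val

lemma FS_bij : Function.Bijective FS := by
  constructor
  · intro p q h
    exact Subtype.ext (Fmap_inj p.2 q.2 (congrArg Subtype.val h))
  · intro y
    obtain ⟨x, hx, hfx⟩ := Fmap_surj y.2
    exact ⟨⟨x, hx⟩, Subtype.ext hfx⟩

noncomputable def annHomeo : (realization AA) ≃ₜ ann := by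
  have : CompactSpace (realization AA) := isCompact_iff_compactSpace.mp real_compact
  exact Continuous.homeoOfEquivCompactToT2 (f := Equiv.ofBijective FS FS_bij) cont_FS

end MogamiPaper
end Part7f

namespace MogamiPaper

/-- there is a 3-pseudomanifold that is Mogami but not LC; in
particular the cone over a triangulated annulus from an external apex. -/
theorem stmt13 :
    ∃ (M N : ℕ) (A : Config (Fin M) 2 N) (v : Fin M),
      IsPseudo A ∧ (∀ i, v ∉ facet A i) ∧
      Nonempty ((realization A) ≃ₜ
        ((Metric.closedBall (0 : EuclideanSpace ℝ (Fin 2)) 2 \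
          Metric.ball (0 : EuclideanSpace ℝ (Fin 2)) 1) :
            Set (EuclideanSpace ℝ (Fin 2)))) ∧
      IsPseudo (cone A v) ∧ IsMogami (cone A v) ∧ ¬ IsLC (cone A v) :=
  ⟨7, 6, AA, 6, AA_pseudo, AA_apex, ⟨annHomeo⟩, coneAA_pseudo, mogami, not_lc⟩

end MogamiPaper
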